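/- Let d, k, n ≥ 2. For ℓ = n, n+1, …, nk set W_ℓ = ⋃_{j_1+⋯+j_n=ℓ} A_{j_1} × ⋯ × A_{j_n} ⊆ F(ℝ^d,k)^n. Then the sets W_n, …, W_{nk} are pairwise disjoint, their union is all of F(ℝ^d,k)^n, and each W_ℓ admits a continuous section of the evaluation map e_n : P(F(ℝ^d,k)) → F(ℝ^d,k)^n. In particular, F(ℝ^d,k)^n can be partitioned into n(k−1)+1 subsets, each admitting a continuous n-th sequential motion planning algorithm. -/

import Mathlib

open unitInterval

noncomputable section

/-- Euclidean space ℝ^d. -/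
abbrev E (d : ℕ) : Type := EuclideanSpace ℝ (Fin d)

/-- The ordered configuration space F(ℝ^d, k) of k distinct points in ℝ^d,
viewed as the subspace of (ℝ^d)^k of injective tuples. -/
def Conf (d k : ℕ) : Set (Fin k → E d) := {x | Function.Injective x}

/-- The time i/(n-1) ∈ [0,1] at which the i-th configuration is visited. -/
def eTime (n : ℕ) (i : Fin n) : unitInterval :=
  Set.projIcc 0 1 zero_le_one ((i : ℝ) / ((n : ℝ) - 1))

/-- The evaluation map e_n : P(X) → X^n,
e_n(γ) = (γ(0), γ(1/(n-1)), …, γ((n-2)/(n-1)), γ(1)). -/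
def evalMap {X : Type*} [TopologicalSpace X] (n : ℕ) (γ : C(unitInterval, X)) : Fin n → X :=
  fun i => γ (eTime n i)

/-- `A ⊆ X^n` admits a continuous section of the evaluation map e_n. -/
def HasSec {X : Type*} [TopologicalSpace X] (n : ℕ) (A : Set (Fin n → X)) : Prop :=
  ∃ s : A → C(unitInterval, X), Continuous s ∧ ∀ a : A, evalMap n (s a) = (a : Fin n → X)

/-- The projection p : ℝ^d → ℝ^d onto the first coordinate axis. -/
def projL {d : ℕ} (x : E d) : E d :=
  (WithLp.equiv 2 (Fin d → ℝ)).symm fun j => if (j : ℕ) = 0 then x j else 0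

/-- cp(C) = cardinality of {p(x_1),…,p(x_k)}. -/
def cp {d k : ℕ} (C : Fin k → E d) : ℕ := (Set.range fun i => projL (C i)).ncard

/-- The product A_{j_1} × ⋯ × A_{j_n} ⊆ F(ℝ^d,k)^n. -/
def Aprod (d k n : ℕ) (jv : Fin n → ℕ) : Set (Fin n → ↥(Conf d k)) :=
  {C | ∀ s : Fin n, cp ((C s : Fin k → E d)) = jv s}

/-- W_ℓ = ⋃_{j_1+⋯+j_n=ℓ} A_{j_1} × ⋯ × A_{j_n}, the indices j_s ranging over
{1,…,k}. -/
def Wset (d k n ℓ : ℕ) : Set (Fin n → ↥(Conf d k)) :=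
  ⋃ (jv : Fin n → ℕ) (_ : (∀ s, 1 ≤ jv s ∧ jv s ≤ k) ∧ (∑ s, jv s) = ℓ),
    Aprod d k n jv

namespace Stmt10Aux

open Finset Function

variable {d k : ℕ}

section defs
variable (o u : Fin d)

/-- within-group rank: number of earlier indices with the same first coordinate. -/
def rho (x : Fin k → E d) (i : Fin k) : ℕ :=
  (Finset.univ.filter (fun i' => x i' o = x i o ∧ i' < i)).card

/-- pairs of indices with distinct first coordinates. -/
def pairS (x : Fin k → E d) : Finset (Fin k × Fin k) :=
  Finset.univ.filter (fun p => x p.1 o ≠ x p.2 o)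

/-- gap computed from a fixed pair set. -/
def gpP (P : Finset (Fin k × Fin k)) (x : Fin k → E d) : ℝ :=
  P.fold min 1 (fun p => |x p.1 o - x p.2 o|)

def gp (x : Fin k → E d) : ℝ := gpP o (pairS o x) x

/-- desingularization with fixed combinatorial data. -/
def dsgP (R : Fin k → ℕ) (P : Finset (Fin k × Fin k)) (x : Fin k → E d) : Fin k → E d :=
  fun i => x i + (gpP o P x / (2 * k) * R i) • EuclideanSpace.single o (1:ℝ)

def dsg (x : Fin k → E d) : Fin k → E d := dsgP o (rho o x) (pairS o x) x

/-- lift: move the u-coordinate of the i-th point to the value i. -/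
def lft (x : Fin k → E d) : Fin k → E d :=
  fun i => x i + (((i : ℕ) : ℝ) - x i u) • EuclideanSpace.single u (1:ℝ)

end defs

section foldmin
variable {ι : Type*}

lemma fold_min_pos (P : Finset ι) (f : ι → ℝ) (hf : ∀ p ∈ P, 0 < f p) :
    0 < P.fold min 1 f := by
  induction P using Finset.cons_induction with
  | empty => simpa using one_pos
  | cons a s ha ih =>
      rw [Finset.fold_cons]
      exact lt_min (hf a (Finset.mem_cons_self a s))
        (ih fun p hp => hf p (Finset.mem_cons_of_mem hp))

lemma fold_min_le (P : Finset ι) (f : ι → ℝ) {p : ι} (hp : p ∈ P) :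
    P.fold min 1 f ≤ f p := by
  induction P using Finset.cons_induction with
  | empty => simp at hp
  | cons a s ha ih =>
      rw [Finset.fold_cons]
      rcases Finset.mem_cons.1 hp with h | h
      · exact le_trans (min_le_left _ _) (le_of_eq (by rw [h]))
      · exact le_trans (min_le_right _ _) (ih h)

lemma continuous_fold_min {α : Type*} [TopologicalSpace α] (P : Finset ι) (f : ι → α → ℝ)
    (hf : ∀ p, Continuous (f p)) : Continuous (fun x => P.fold min 1 (fun p => f p x)) := by
  induction P using Finset.cons_induction with
  | empty => simpa using continuous_const
  | cons a s ha ih =>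
      simpa [Finset.fold_cons] using (hf a).min ih

end foldmin

variable {o u : Fin d}

lemma gp_pos (o : Fin d) (x : Fin k → E d) : 0 < gp o x := by
  apply fold_min_pos
  intro p hp
  rw [pairS, Finset.mem_filter] at hp
  exact abs_pos.2 (sub_ne_zero.2 hp.2)

lemma gp_le (o : Fin d) (x : Fin k → E d) {i i' : Fin k} (h : x i o ≠ x i' o) :
    gp o x ≤ |x i o - x i' o| := by
  have hp : (i, i') ∈ pairS o x := by simp [pairS, h]
  exact fold_min_le _ (fun p => |x p.1 o - x p.2 o|) hp

lemma rho_le (o : Fin d) (x : Fin k → E d) (i : Fin k) : rho o x i ≤ k - 1 := by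
  have h1 : (Finset.univ.filter (fun i' => x i' o = x i o ∧ i' < i)) ⊆ Finset.univ.erase i := by
    intro j hj
    rw [Finset.mem_filter] at hj
    exact Finset.mem_erase.2 ⟨ne_of_lt hj.2.2, Finset.mem_univ j⟩
  calc rho o x i ≤ (Finset.univ.erase i).card := Finset.card_le_card h1
    _ = k - 1 := by rw [Finset.card_erase_of_mem (Finset.mem_univ i)]; simp

lemma rho_lt (o : Fin d) (x : Fin k → E d) {i i' : Fin k} (h : x i o = x i' o) (hlt : i < i') :
    rho o x i < rho o x i' := by
  apply Finset.card_lt_card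
  constructor
  · intro j hj
    rw [Finset.mem_filter] at hj ⊢
    exact ⟨Finset.mem_univ j, h ▸ hj.2.1, lt_trans hj.2.2 hlt⟩
  · intro hsub
    have : i ∈ Finset.univ.filter (fun i'' => x i'' o = x i' o ∧ i'' < i') := by
      rw [Finset.mem_filter]; exact ⟨Finset.mem_univ i, h, hlt⟩
    have hi := hsub this
    rw [Finset.mem_filter] at hi
    exact lt_irrefl i hi.2.2

/-- key quantitative separation: if the base points are `gp`-separated and the
perturbations are at most `gp/(2k)*(k-1)`, sums stay distinct. -/
lemma sep_bound (hk : 0 < k) (o : Fin d) (x : Fin k → E d) {b b' a a' : ℝ}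
    (hgap : gp o x ≤ |b - b'|)
    (ha : |a| ≤ gp o x / (2 * k) * ((k : ℝ) - 1))
    (ha' : |a'| ≤ gp o x / (2 * k) * ((k : ℝ) - 1)) : b + a ≠ b' + a' := by
  intro h
  have hg := gp_pos o x
  set g := gp o x with hgdef
  have hkR : (1 : ℝ) ≤ (k : ℝ) := by exact_mod_cast hk
  have h1 : b - b' = a' - a := by linarith
  have h2 : |b - b'| ≤ |a'| + |a| := by
    rw [h1]; exact abs_sub _ _
  have h3 : g / (2 * k) * ((k : ℝ) - 1) < g / 2 := by
    rw [div_mul_eq_mul_div, div_lt_div_iff₀ (by positivity) (by norm_num)]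
    nlinarith
  linarith [abs_nonneg (b - b')]

lemma coef_bound (hk : 0 < k) (o : Fin d) (x : Fin k → E d) {w : ℝ} (hw0 : 0 ≤ w) (hw1 : w ≤ 1)
    (i : Fin k) : |w * (gp o x / (2 * k) * (rho o x i : ℝ))| ≤ gp o x / (2 * k) * ((k : ℝ) - 1) := by
  have hg := gp_pos o x
  have hr : (rho o x i : ℝ) ≤ (k : ℝ) - 1 := by
    have := rho_le o x i
    have hk1 : ((k - 1 : ℕ) : ℝ) = (k : ℝ) - 1 := by
      rw [Nat.cast_sub hk]; norm_num
    calc (rho o x i : ℝ) ≤ ((k - 1 : ℕ) : ℝ) := by exact_mod_cast this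
      _ = (k : ℝ) - 1 := hk1
  have hpos : (0:ℝ) ≤ gp o x / (2 * k) := by positivity
  rw [abs_of_nonneg (by positivity)]
  calc w * (gp o x / (2 * k) * (rho o x i : ℝ)) ≤ 1 * (gp o x / (2 * k) * ((k:ℝ)-1)) := by
        apply mul_le_mul hw1 (by exact mul_le_mul_of_nonneg_left hr hpos) (by positivity)
        norm_num
    _ = gp o x / (2 * k) * ((k:ℝ)-1) := one_mul _

/-- Phase-0 injectivity: perturbing the o-coordinates by `w·δ·ρ` keeps the
configuration injective, for `w ∈ [0,1]`. -/
lemma P0_inj (hk : 0 < k) (o : Fin d) {x : Fin k → E d} (hx : Function.Injective x)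
    {w : ℝ} (hw0 : 0 ≤ w) (hw1 : w ≤ 1) :
    Function.Injective (fun i => x i + (w * (gp o x / (2 * k) * (rho o x i : ℝ))) •
      EuclideanSpace.single o (1:ℝ)) := by
  intro i i' h
  have hj : ∀ j : Fin d, x i j + (w * (gp o x / (2 * k) * (rho o x i : ℝ))) *
      (if j = o then 1 else 0) = x i' j + (w * (gp o x / (2 * k) * (rho o x i' : ℝ))) *
      (if j = o then 1 else 0) := by
    intro j
    have := congrArg (fun v : E d => v j) h
    simpa [PiLp.add_apply, PiLp.smul_apply, EuclideanSpace.single_apply, smul_eq_mul] using this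
  by_cases hoo : x i o = x i' o
  · apply hx
    ext j
    by_cases hj' : j = o
    · rw [hj']; exact hoo
    · have := hj j; rw [if_neg hj'] at this; simpa using this
  · exfalso
    have h1 := hj o
    rw [if_pos rfl, mul_one, mul_one] at h1
    exact sep_bound hk o x (gp_le o x hoo) (coef_bound hk o x hw0 hw1 i)
      (coef_bound hk o x hw0 hw1 i') h1

/-- the desingularized configuration has pairwise distinct o-coordinates. -/
lemma dsg_sep (hk : 0 < k) (o : Fin d) {x : Fin k → E d} (hx : Function.Injective x)
    {i i' : Fin k} (h : i ≠ i') : dsg o x i o ≠ dsg o x i' o := by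
  have hg := gp_pos o x
  have hco : ∀ m : Fin k, dsg o x m o = x m o + gp o x / (2 * k) * (rho o x m : ℝ) := by
    intro m
    simp [dsg, dsgP, PiLp.add_apply, PiLp.smul_apply, EuclideanSpace.single_apply,
      smul_eq_mul, gp]
  rw [hco i, hco i']
  by_cases hoo : x i o = x i' o
  · rw [hoo]
    intro hcon
    have hrho : (rho o x i : ℝ) = rho o x i' := by
      have h2k : (0:ℝ) < gp o x / (2 * k) := by positivity
      exact mul_left_cancel₀ h2k.ne' (add_left_cancel hcon)
    have : rho o x i ≠ rho o x i' := by
      rcases lt_or_gt_of_ne h with hlt | hlt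
      · exact ne_of_lt (rho_lt o x hoo hlt)
      · exact ne_of_gt (rho_lt o x hoo.symm hlt)
    exact this (by exact_mod_cast hrho)
  · intro hcon
    have hb := coef_bound hk o x zero_le_one le_rfl i
    have hb' := coef_bound hk o x zero_le_one le_rfl i'
    rw [one_mul] at hb hb'
    exact sep_bound hk o x (gp_le o x hoo) hb hb' hcon

/-- Phase-1 injectivity: moving the u-coordinate while the o-coordinates are
pairwise distinct. -/
lemma P1_inj (hou : o ≠ u) {y : Fin k → E d} (hy : ∀ i i' : Fin k, y i o = y i' o → i = i')
    (w : ℝ) :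
    Function.Injective (fun i => y i + (w * (((i : ℕ) : ℝ) - y i u)) •
      EuclideanSpace.single u (1:ℝ)) := by
  intro i i' h
  apply hy
  have := congrArg (fun v : E d => v o) h
  simpa [PiLp.add_apply, PiLp.smul_apply, EuclideanSpace.single_apply, hou,
    smul_eq_mul] using this

/-- Phase-2 injectivity: interpolating between two lifted configurations. -/
lemma P2_inj (y z : Fin k → E d) (v : ℝ) :
    Function.Injective (fun i => (1 - v) • lft u y i + v • lft u z i) := by
  intro i i' h
  have hu : ∀ m : Fin k, ((1 - v) • lft u y m + v • lft u z m) u = (m : ℕ) := by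
    intro m
    have h1 : lft u y m u = (m : ℕ) := by
      simp [lft, PiLp.add_apply, PiLp.smul_apply, EuclideanSpace.single_apply, smul_eq_mul]
    have h2 : lft u z m u = (m : ℕ) := by
      simp [lft, PiLp.add_apply, PiLp.smul_apply, EuclideanSpace.single_apply, smul_eq_mul]
    simp [PiLp.add_apply, PiLp.smul_apply, h1, h2, smul_eq_mul]
    ring
  have hval : ((i : ℕ) : ℝ) = ((i' : ℕ) : ℝ) := by
    rw [← hu i, ← hu i']; exact congrArg (fun v : E d => v u) h
  exact Fin.ext (by exact_mod_cast hval)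

section path
variable (o u : Fin d)

def clamp (r : ℝ) : ℝ := max 0 (min 1 r)

lemma clamp_of_nonpos {r : ℝ} (h : r ≤ 0) : clamp r = 0 := by
  unfold clamp
  rw [max_eq_left (le_trans (min_le_right 1 r) h)]

lemma clamp_of_one_le {r : ℝ} (h : 1 ≤ r) : clamp r = 1 := by
  unfold clamp
  rw [min_eq_left h, max_eq_right zero_le_one]

lemma clamp_of_mem {r : ℝ} (h0 : 0 ≤ r) (h1 : r ≤ 1) : clamp r = r := by
  unfold clamp
  rw [min_eq_right h1, max_eq_right h0]

lemma continuous_clamp : Continuous clamp :=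
  continuous_const.max (continuous_const.min continuous_id)

variable {n : ℕ}

def cidx (n : ℕ) (hn : 0 < n) (s : ℕ) : Fin n := ⟨min s (n-1), by omega⟩

def EseqP (hn : 0 < n) (R : Fin n → Fin k → ℕ) (P : Fin n → Finset (Fin k × Fin k))
    (C : Fin n → Fin k → E d) (q : ℕ) : Fin k → E d :=
  if q % 5 = 0 then C (cidx n hn (q/5))
  else if q % 5 = 1 then
    dsgP o (R (cidx n hn (q/5))) (P (cidx n hn (q/5))) (C (cidx n hn (q/5)))
  else if q % 5 = 2 then
    lft u (dsgP o (R (cidx n hn (q/5))) (P (cidx n hn (q/5))) (C (cidx n hn (q/5))))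
  else if q % 5 = 3 then
    lft u (dsgP o (R (cidx n hn (q/5+1))) (P (cidx n hn (q/5+1))) (C (cidx n hn (q/5+1))))
  else dsgP o (R (cidx n hn (q/5+1))) (P (cidx n hn (q/5+1))) (C (cidx n hn (q/5+1)))

def Eseq (hn : 0 < n) (C : Fin n → Fin k → E d) : ℕ → Fin k → E d :=
  EseqP o u hn (fun s => rho o (C s)) (fun s => pairS o (C s)) C

def posP (hn : 0 < n) (R : Fin n → Fin k → ℕ) (P : Fin n → Finset (Fin k × Fin k))
    (C : Fin n → Fin k → E d) (t : ℝ) : Fin k → E d :=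
  EseqP o u hn R P C 0 + ∑ q ∈ Finset.range (5*(n-1)),
    clamp (((5*(n-1) : ℕ) : ℝ) * t - q) • (EseqP o u hn R P C (q+1) - EseqP o u hn R P C q)

def pos (hn : 0 < n) (C : Fin n → Fin k → E d) : ℝ → Fin k → E d :=
  posP o u hn (fun s => rho o (C s)) (fun s => pairS o (C s)) C

lemma posP_congr (hn : 0 < n) {R : Fin n → Fin k → ℕ} {P : Fin n → Finset (Fin k × Fin k)}
    (C : Fin n → Fin k → E d) (hR : ∀ s, R s = rho o (C s)) (hP : ∀ s, P s = pairS o (C s))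
    (t : ℝ) : posP o u hn R P C t = pos o u hn C t := by
  have h1 : R = fun s => rho o (C s) := funext hR
  have h2 : P = fun s => pairS o (C s) := funext hP
  rw [pos, h1, h2]

/-- the piecewise form of `pos`. -/
lemma pos_piece (hn : 0 < n) (C : Fin n → Fin k → E d) (q : ℕ) (hq : q < 5*(n-1)) (t : ℝ)
    (h1 : (q : ℝ) ≤ ((5*(n-1) : ℕ) : ℝ) * t) (h2 : ((5*(n-1) : ℕ) : ℝ) * t ≤ q + 1) :
    pos o u hn C t = Eseq o u hn C q +
      (((5*(n-1) : ℕ) : ℝ) * t - q) • (Eseq o u hn C (q+1) - Eseq o u hn C q) := by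
  set N := 5*(n-1) with hN
  set Nr := ((N : ℕ) : ℝ) with hNr
  set F : ℕ → Fin k → E d := Eseq o u hn C with hF
  show F 0 + ∑ q' ∈ Finset.range N, clamp (Nr * t - q') • (F (q'+1) - F q') = _
  have hsum : ∑ q' ∈ Finset.range N, clamp (Nr * t - q') • (F (q'+1) - F q') =
      (∑ q' ∈ Finset.range q, clamp (Nr * t - q') • (F (q'+1) - F q')) +
      clamp (Nr * t - q) • (F (q+1) - F q) := by
    rw [Finset.range_eq_Ico, ← Finset.sum_Ico_consecutive _ (Nat.zero_le (q+1)) (by omega : q+1 ≤ N)]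
    have hz : ∑ q' ∈ Finset.Ico (q+1) N, clamp (Nr * t - q') • (F (q'+1) - F q') = 0 := by
      apply Finset.sum_eq_zero
      intro q' hq'
      rw [Finset.mem_Ico] at hq'
      have : Nr * t - q' ≤ 0 := by
        have : ((q:ℝ)+1) ≤ (q' : ℝ) := by exact_mod_cast hq'.1
        linarith
      rw [clamp_of_nonpos this, zero_smul]
    rw [hz, add_zero, ← Finset.range_eq_Ico, Finset.sum_range_succ]
  rw [hsum]
  have hones : ∑ q' ∈ Finset.range q, clamp (Nr * t - q') • (F (q'+1) - F q') =
      ∑ q' ∈ Finset.range q, (F (q'+1) - F q') := by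
    apply Finset.sum_congr rfl
    intro q' hq'
    rw [Finset.mem_range] at hq'
    have : (1:ℝ) ≤ Nr * t - q' := by
      have : ((q':ℝ)+1) ≤ (q : ℝ) := by exact_mod_cast hq'
      linarith
    rw [clamp_of_one_le this, one_smul]
  rw [hones, Finset.sum_range_sub (fun q' => F q'), clamp_of_mem (by linarith) (by linarith)]
  abel

lemma Eseq_mul5 (hn : 0 < n) (C : Fin n → Fin k → E d) (s : ℕ) :
    Eseq o u hn C (5*s) = C (cidx n hn s) := by
  unfold Eseq EseqP
  rw [if_pos (Nat.mul_mod_right 5 s), Nat.mul_div_cancel_left s (by norm_num)]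

lemma pos_eval (hn : 0 < n) (hn2 : 2 ≤ n) (C : Fin n → Fin k → E d) (i : Fin n) :
    pos o u hn C ((i : ℝ) / ((n : ℝ) - 1)) = C i := by
  have hn1R : ((n:ℝ) - 1) ≠ 0 := by
    have : (2:ℝ) ≤ (n:ℝ) := by exact_mod_cast hn2
    linarith
  have hNr : ((5*(n-1) : ℕ) : ℝ) = 5 * ((n:ℝ) - 1) := by
    push_cast [Nat.cast_sub (by omega : 1 ≤ n)]; ring
  by_cases hi : (i : ℕ) < n - 1
  · have hNt : ((5*(n-1) : ℕ) : ℝ) * ((i : ℝ) / ((n : ℝ) - 1)) = (5 * (i:ℕ) : ℕ) := by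
      rw [hNr]; push_cast; field_simp
    have hq : 5*(i:ℕ) < 5*(n-1) := by omega
    rw [pos_piece o u hn C (5*(i:ℕ)) hq _ (by rw [hNt]) (by rw [hNt]; push_cast; linarith)]
    rw [hNt, sub_self, zero_smul, add_zero, Eseq_mul5]
    have : cidx n hn (i:ℕ) = i := Fin.ext (by simp [cidx]; omega)
    rw [this]
  · have hival : (i : ℕ) = n - 1 := by omega
    have hiR : (i : ℝ) = (n:ℝ) - 1 := by
      rw [show ((i:ℕ):ℝ) = (((n-1 : ℕ)):ℝ) from congrArg Nat.cast hival]
      push_cast [Nat.cast_sub (by omega : 1 ≤ n)]; ring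
    have ht : (i : ℝ) / ((n : ℝ) - 1) = 1 := by rw [hiR]; field_simp
    have hN1 : 1 ≤ 5*(n-1) := by omega
    have hNt : ((5*(n-1) : ℕ) : ℝ) * ((i : ℝ) / ((n : ℝ) - 1)) = ((5*(n-1) : ℕ) : ℝ) := by
      rw [ht, mul_one]
    have hcast : ((5*(n-1) - 1 : ℕ) : ℝ) = ((5*(n-1) : ℕ) : ℝ) - 1 := by
      push_cast [Nat.cast_sub hN1]; ring
    rw [pos_piece o u hn C (5*(n-1) - 1) (by omega) _
      (by rw [hNt, hcast]; linarith) (by rw [hNt, hcast]; linarith)]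
    rw [hNt, hcast, show 5*(n-1) - 1 + 1 = 5*(n-1) by omega]
    have : ((5*(n-1):ℕ):ℝ) - (((5*(n-1):ℕ):ℝ) - 1) = 1 := by ring
    rw [this, one_smul]
    have hE : Eseq o u hn C (5*(n-1)) = C i := by
      rw [Eseq_mul5]
      have : cidx n hn (n-1) = i := Fin.ext (by simp [cidx]; omega)
      rw [this]
    rw [hE]
    abel

variable (hn : 0 < n)

lemma Eseq0 (C : Fin n → Fin k → E d) {q : ℕ} (h : q % 5 = 0) :
    Eseq o u hn C q = C (cidx n hn (q/5)) := by
  unfold Eseq EseqP; rw [if_pos h]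

lemma Eseq1 (C : Fin n → Fin k → E d) {q : ℕ} (h : q % 5 = 1) :
    Eseq o u hn C q = dsg o (C (cidx n hn (q/5))) := by
  unfold Eseq EseqP dsg; rw [if_neg (by omega), if_pos h]

lemma Eseq2 (C : Fin n → Fin k → E d) {q : ℕ} (h : q % 5 = 2) :
    Eseq o u hn C q = lft u (dsg o (C (cidx n hn (q/5)))) := by
  unfold Eseq EseqP dsg; rw [if_neg (by omega), if_neg (by omega), if_pos h]

lemma Eseq3 (C : Fin n → Fin k → E d) {q : ℕ} (h : q % 5 = 3) :
    Eseq o u hn C q = lft u (dsg o (C (cidx n hn (q/5+1)))) := by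
  unfold Eseq EseqP dsg
  rw [if_neg (by omega), if_neg (by omega), if_neg (by omega), if_pos h]

lemma Eseq4 (C : Fin n → Fin k → E d) {q : ℕ} (h : q % 5 = 4) :
    Eseq o u hn C q = dsg o (C (cidx n hn (q/5+1))) := by
  unfold Eseq EseqP dsg
  rw [if_neg (by omega), if_neg (by omega), if_neg (by omega), if_neg (by omega)]

lemma pos_inj (hk : 0 < k) (hou : o ≠ u) (hn2 : 2 ≤ n)
    (C : Fin n → Fin k → E d) (hC : ∀ s, Function.Injective (C s))
    {t : ℝ} (ht0 : 0 ≤ t) (ht1 : t ≤ 1) : Function.Injective (pos o u hn C t) := by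
  set N := 5*(n-1) with hN
  have hN1 : 1 ≤ N := by omega
  set Nr := ((N : ℕ) : ℝ) with hNrdef
  have hNrpos : (0:ℝ) ≤ Nr := by positivity
  have hNt0 : 0 ≤ Nr * t := by positivity
  set q := min ⌊Nr * t⌋₊ (N - 1) with hqdef
  have hqN : q < N := by omega
  have h1 : (q : ℝ) ≤ Nr * t := by
    have ha : q ≤ ⌊Nr * t⌋₊ := Nat.min_le_left _ _
    have hb : ((⌊Nr * t⌋₊ : ℕ) : ℝ) ≤ Nr * t := Nat.floor_le hNt0
    calc (q:ℝ) ≤ ((⌊Nr * t⌋₊ : ℕ) : ℝ) := by exact_mod_cast ha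
      _ ≤ Nr * t := hb
  have h2 : Nr * t ≤ (q : ℝ) + 1 := by
    by_cases hf : ⌊Nr * t⌋₊ ≤ N - 1
    · have hq' : q = ⌊Nr * t⌋₊ := min_eq_left hf
      rw [hq']
      have := Nat.lt_floor_add_one (Nr * t)
      exact_mod_cast this.le
    · have hq' : q = N - 1 := min_eq_right (by omega)
      have hle : Nr * t ≤ Nr := mul_le_of_le_one_right hNrpos ht1
      have : ((N : ℕ) : ℝ) = ((N - 1 : ℕ) : ℝ) + 1 := by
        push_cast [Nat.cast_sub hN1]; ring
      rw [hq']
      calc Nr * t ≤ Nr := hle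
        _ = ((N - 1 : ℕ) : ℝ) + 1 := this
  rw [pos_piece o u hn C q hqN t h1 h2]
  set v := Nr * t - (q:ℝ) with hvdef
  have hv0 : 0 ≤ v := by simp only [hvdef]; linarith
  have hv1 : v ≤ 1 := by simp only [hvdef]; linarith
  have hform : (Eseq o u hn C q + v • (Eseq o u hn C (q+1) - Eseq o u hn C q)) =
      fun i => (1-v) • Eseq o u hn C q i + v • Eseq o u hn C (q+1) i := by
    funext i
    simp only [Pi.add_apply, Pi.smul_apply, Pi.sub_apply]
    module
  rw [hform]
  have hm5 : q % 5 = 0 ∨ q % 5 = 1 ∨ q % 5 = 2 ∨ q % 5 = 3 ∨ q % 5 = 4 := by omega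
  rcases hm5 with hm | hm | hm | hm | hm
  · -- phase 0 : C sg → dsg (C sg)
    have e1 : (q+1) % 5 = 1 := by omega
    have e2 : (q+1) / 5 = q / 5 := by omega
    rw [Eseq0 o u hn C hm, Eseq1 o u hn C e1, e2]
    set sg := cidx n hn (q/5)
    have : (fun i => (1-v) • C sg i + v • dsg o (C sg) i) =
        (fun i => C sg i + (v * (gp o (C sg) / (2 * k) * (rho o (C sg) i : ℝ))) •
          EuclideanSpace.single o (1:ℝ)) := by
      funext i
      simp only [dsg, dsgP, gp]
      module
    rw [this]
    exact P0_inj hk o (hC sg) hv0 hv1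
  · -- phase 1 : dsg (C sg) → lft (dsg (C sg))
    have e1 : (q+1) % 5 = 2 := by omega
    have e2 : (q+1) / 5 = q / 5 := by omega
    rw [Eseq1 o u hn C hm, Eseq2 o u hn C e1, e2]
    set sg := cidx n hn (q/5)
    set y := dsg o (C sg) with hy
    have hsep : ∀ i i' : Fin k, y i o = y i' o → i = i' := by
      intro i i' h
      by_contra hne
      exact dsg_sep hk o (hC sg) hne h
    have : (fun i => (1-v) • y i + v • lft u y i) =
        (fun i => y i + (v * (((i : ℕ) : ℝ) - y i u)) • EuclideanSpace.single u (1:ℝ)) := by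
      funext i
      simp only [lft]
      module
    rw [this]
    exact P1_inj hou hsep v
  · -- phase 2 : lft (dsg (C sg)) → lft (dsg (C sg'))
    have e1 : (q+1) % 5 = 3 := by omega
    have e2 : (q+1) / 5 = q / 5 := by omega
    rw [Eseq2 o u hn C hm, Eseq3 o u hn C e1, e2]
    exact P2_inj _ _ v
  · -- phase 3 : lft (dsg (C sg')) → dsg (C sg')
    have e1 : (q+1) % 5 = 4 := by omega
    have e2 : (q+1) / 5 = q / 5 := by omega
    rw [Eseq3 o u hn C hm, Eseq4 o u hn C e1, e2]
    set sg := cidx n hn (q/5+1)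
    set y := dsg o (C sg) with hy
    have hsep : ∀ i i' : Fin k, y i o = y i' o → i = i' := by
      intro i i' h
      by_contra hne
      exact dsg_sep hk o (hC sg) hne h
    have : (fun i => (1-v) • lft u y i + v • y i) =
        (fun i => y i + ((1-v) * (((i : ℕ) : ℝ) - y i u)) • EuclideanSpace.single u (1:ℝ)) := by
      funext i
      simp only [lft]
      module
    rw [this]
    exact P1_inj hou hsep (1-v)
  · -- phase 4 : dsg (C sg') → C sg'
    have e1 : (q+1) % 5 = 0 := by omega
    have e2 : (q+1) / 5 = q / 5 + 1 := by omega
    rw [Eseq4 o u hn C hm, Eseq0 o u hn C e1, e2]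
    set sg := cidx n hn (q/5+1)
    have : (fun i => (1-v) • dsg o (C sg) i + v • C sg i) =
        (fun i => C sg i + ((1-v) * (gp o (C sg) / (2 * k) * (rho o (C sg) i : ℝ))) •
          EuclideanSpace.single o (1:ℝ)) := by
      funext i
      simp only [dsg, dsgP, gp]
      module
    rw [this]
    exact P0_inj hk o (hC sg) (by linarith) (by linarith)

end path

end Stmt10Aux

namespace Stmt10Aux

open Finset Function

variable {d k : ℕ}

/-- number of distinct o-coordinates, as a Finset cardinality. -/
def cpr (o : Fin d) (x : Fin k → E d) : ℕ := (Finset.image (fun i => x i o) Finset.univ).card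

/-- key semicontinuity/local-constancy lemma. -/
lemma key (hk : 0 < k) (o : Fin d) (x x' : Fin k → E d)
    (hcl : ∀ i, |x' i o - x i o| < gp o x / 4) :
    cpr o x ≤ cpr o x' ∧
      (cpr o x' = cpr o x → ∀ i i' : Fin k, (x' i o = x' i' o ↔ x i o = x i' o)) := by
  haveI : Nonempty (Fin k) := Fin.pos_iff_nonempty.1 hk
  set f : Fin k → ℝ := fun i => x i o with hf
  set f' : Fin k → ℝ := fun i => x' i o with hf'
  set g := gp o x with hg
  have hgpos : 0 < g := gp_pos o x
  have hne : ∀ i i' : Fin k, f i ≠ f i' → f' i ≠ f' i' := by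
    intro i i' h hcon
    have hge := gp_le o x h
    have h1 := hcl i
    have h2 := hcl i'
    have : |f i - f i'| = |(f i - f' i) + (f' i' - f i')| := by rw [hcon]; ring_nf
    have hle : |f i - f i'| ≤ |f i - f' i| + |f' i' - f i'| := by
      rw [this]; exact abs_add_le _ _
    rw [abs_sub_comm (f i) (f' i)] at hle
    simp only [hf, hf'] at hle h1 h2
    linarith [hge]
  set B := Finset.image f Finset.univ with hB
  set A := Finset.image f' Finset.univ with hA
  set e : ℝ → ℝ := fun b => f' (Function.invFun f b) with he
  have hfe : ∀ b ∈ B, f (Function.invFun f b) = b := by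
    intro b hb
    rw [Finset.mem_image] at hb
    obtain ⟨i, _, hi⟩ := hb
    exact Function.invFun_eq ⟨i, hi⟩
  have hmapsto : ∀ b ∈ B, e b ∈ A := by
    intro b hb
    rw [hA, Finset.mem_image]
    exact ⟨Function.invFun f b, Finset.mem_univ _, rfl⟩
  have hinj : Set.InjOn e B := by
    intro b hb b' hb' hebb
    by_contra hbb
    exact hne _ _ (by rw [hfe b hb, hfe b' hb']; exact hbb) hebb
  have hcard : B.card ≤ A.card := Finset.card_le_card_of_injOn e hmapsto hinj
  refine ⟨hcard, ?_⟩
  intro hAB i i'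
  constructor
  · intro h
    by_contra hne'
    exact hne i i' hne' h
  · intro h
    -- use surjectivity of e
    have hsurj := Finset.surj_on_of_inj_on_of_card_le (fun b _ => e b)
      (fun b hb => hmapsto b hb) (fun b b' hb hb' hee => hinj hb hb' hee) (le_of_eq hAB)
    have hsep : ∀ b ∈ B, ∀ b' ∈ B, |b - b'| < g → b = b' := by
      intro b hb b' hb' hlt
      by_contra hbb
      rw [Finset.mem_image] at hb hb'
      obtain ⟨i1, _, hi1⟩ := hb
      obtain ⟨i2, _, hi2⟩ := hb'
      have hne12 : f i1 ≠ f i2 := by rw [hi1, hi2]; exact hbb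
      have h4 := gp_le o x hne12
      have h5 : g ≤ |b - b'| := by
        rw [← show f i1 = b from hi1, ← show f i2 = b' from hi2]
        exact h4
      linarith
    have hclose : ∀ b ∈ B, |e b - b| < g / 4 := by
      intro b hb
      have h6 := hcl (Function.invFun f b)
      have h7 : f (Function.invFun f b) = b := hfe b hb
      have h8 : |e b - b| = |f' (Function.invFun f b) - f (Function.invFun f b)| := by rw [h7]
      rw [h8]
      exact h6
    have key1 : ∀ m : Fin k, ∀ b ∈ B, e b = f' m → b = f m := by
      intro m b hb heb
      apply hsep b hb (f m) (by rw [hB, Finset.mem_image]; exact ⟨m, Finset.mem_univ m, rfl⟩)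
      have h1 := hclose b hb
      have h2' : |f' m - f m| < g / 4 := hcl m
      have h8 : |b - f m| ≤ |f' m - b| + |f' m - f m| := by
        have heq : b - f m = -(f' m - b) + (f' m - f m) := by ring
        rw [heq]
        refine le_trans (abs_add_le _ _) ?_
        rw [abs_neg]
      have h9 : |f' m - b| < g / 4 := by
        rw [← heb]
        exact h1
      linarith
    obtain ⟨b, hb, hbe⟩ : ∃ b ∈ B, e b = f' i := by
      obtain ⟨a, ha, hae⟩ := hsurj (f' i) (by rw [hA, Finset.mem_image]; exact ⟨i, Finset.mem_univ i, rfl⟩)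
      exact ⟨a, ha, hae.symm⟩
    obtain ⟨b', hb', hbe'⟩ : ∃ b' ∈ B, e b' = f' i' := by
      obtain ⟨a, ha, hae⟩ := hsurj (f' i') (by rw [hA, Finset.mem_image]; exact ⟨i', Finset.mem_univ i', rfl⟩)
      exact ⟨a, ha, hae.symm⟩
    have hb1 : b = f i := key1 i b hb hbe
    have hb2 : b' = f i' := key1 i' b' hb' hbe'
    have hbb' : b = b' := by rw [hb1, hb2]; exact h
    show f' i = f' i'
    rw [← hbe, ← hbe', hbb']

end Stmt10Aux

namespace Stmt10Aux

open Finset Function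

variable {d k n : ℕ}

lemma cont_coord (o : Fin d) (i : Fin k) : Continuous fun x : Fin k → E d => x i o :=
  (EuclideanSpace.proj o).continuous.comp (continuous_apply i)

lemma cont_gpP (o : Fin d) (P : Finset (Fin k × Fin k)) :
    Continuous fun x : Fin k → E d => gpP o P x :=
  continuous_fold_min P _ fun p => ((cont_coord o p.1).sub (cont_coord o p.2)).abs

lemma cont_dsgP (o : Fin d) (R : Fin k → ℕ) (P : Finset (Fin k × Fin k)) :
    Continuous (dsgP o R P : (Fin k → E d) → (Fin k → E d)) := by
  apply continuous_pi
  intro i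
  exact (continuous_apply i).add
    ((((cont_gpP o P).div_const _).mul continuous_const).smul continuous_const)

lemma cont_lft (u : Fin d) : Continuous (lft u : (Fin k → E d) → (Fin k → E d)) := by
  apply continuous_pi
  intro i
  exact (continuous_apply i).add ((continuous_const.sub (cont_coord u i)).smul continuous_const)

lemma cont_EseqP (o u : Fin d) (hn : 0 < n) (R : Fin n → Fin k → ℕ)
    (P : Fin n → Finset (Fin k × Fin k)) (q : ℕ) :
    Continuous fun C : Fin n → Fin k → E d => EseqP o u hn R P C q := by
  unfold EseqP
  split_ifs
  · exact continuous_apply _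
  · exact (cont_dsgP o _ _).comp (continuous_apply _)
  · exact (cont_lft u).comp ((cont_dsgP o _ _).comp (continuous_apply _))
  · exact (cont_lft u).comp ((cont_dsgP o _ _).comp (continuous_apply _))
  · exact (cont_dsgP o _ _).comp (continuous_apply _)

lemma cont_posP (o u : Fin d) (hn : 0 < n) (R : Fin n → Fin k → ℕ)
    (P : Fin n → Finset (Fin k × Fin k)) :
    Continuous fun p : (Fin n → Fin k → E d) × ℝ => posP o u hn R P p.1 p.2 := by
  unfold posP
  apply Continuous.add
  · exact (cont_EseqP o u hn R P 0).comp continuous_fst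
  · apply continuous_finset_sum
    intro q _
    exact (continuous_clamp.comp ((continuous_const.mul continuous_snd).sub continuous_const)).smul
      (((cont_EseqP o u hn R P (q+1)).comp continuous_fst).sub
        ((cont_EseqP o u hn R P q).comp continuous_fst))

lemma cont_pos_t (o u : Fin d) (hn : 0 < n) (C : Fin n → Fin k → E d) :
    Continuous fun t : ℝ => pos o u hn C t := by
  have := (cont_posP o u hn (fun s => rho o (C s)) (fun s => pairS o (C s))).comp
    (Continuous.prodMk continuous_const continuous_id : Continuous fun t : ℝ => (C, t))
  exact this

lemma rel_rho (o : Fin d) (x x' : Fin k → E d)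
    (hrel : ∀ i i' : Fin k, x' i o = x' i' o ↔ x i o = x i' o) :
    rho o x' = rho o x := by
  funext i
  unfold rho
  congr 1
  apply Finset.filter_congr
  intro j _
  rw [hrel j i]

lemma rel_pairS (o : Fin d) (x x' : Fin k → E d)
    (hrel : ∀ i i' : Fin k, x' i o = x' i' o ↔ x i o = x i' o) :
    pairS o x' = pairS o x := by
  unfold pairS
  apply Finset.filter_congr
  intro p _
  rw [ne_eq, ne_eq, hrel p.1 p.2]

end Stmt10Aux

namespace Stmt10Aux

open Finset Function

variable {d k n : ℕ}

set_option maxHeartbeats 1000000 in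
lemma pos_contOn (hk : 0 < k) (o u : Fin d) (hn : 0 < n) (ℓ : ℕ) :
    ContinuousOn (fun p : (Fin n → Fin k → E d) × ℝ => pos o u hn p.1 p.2)
      ({C : Fin n → Fin k → E d | ∑ s, cpr o (C s) = ℓ} ×ˢ (Set.univ : Set ℝ)) := by
  haveI : Nonempty (Fin n) := Fin.pos_iff_nonempty.1 hn
  set S := {C : Fin n → Fin k → E d | ∑ s, cpr o (C s) = ℓ} with hS
  intro p₀ hp₀
  have hC₀S : p₀.1 ∈ S := hp₀.1
  set C₀ := p₀.1 with hC₀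
  set ε := (Finset.univ.inf' Finset.univ_nonempty fun s : Fin n => gp o (C₀ s)) / 4 with hε
  have hεpos : 0 < ε := by
    rw [hε]
    apply div_pos _ (by norm_num)
    rw [Finset.lt_inf'_iff]
    intro s _
    exact gp_pos o (C₀ s)
  have hεle : ∀ s : Fin n, ε ≤ gp o (C₀ s) / 4 := by
    intro s
    rw [hε]
    exact div_le_div_of_nonneg_right (Finset.inf'_le _ (Finset.mem_univ s)) (by norm_num)
  set U := {p : (Fin n → Fin k → E d) × ℝ | ∀ s i, |p.1 s i o - C₀ s i o| < ε} with hU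
  have hUopen : IsOpen U := by
    have hUeq : U = ⋂ s : Fin n, ⋂ i : Fin k, {p : (Fin n → Fin k → E d) × ℝ |
        |p.1 s i o - C₀ s i o| < ε} := by
      ext p; simp [hU, Set.mem_iInter]
    rw [hUeq]
    apply isOpen_iInter_of_finite
    intro s
    apply isOpen_iInter_of_finite
    intro i
    exact isOpen_lt (by fun_prop) continuous_const
  have hp₀U : p₀ ∈ U := by
    intro s i
    simpa [hC₀] using hεpos
  -- on the neighborhood, the combinatorial data is constant
  have hdata : ∀ p ∈ (S ×ˢ (Set.univ : Set ℝ)) ∩ U, ∀ s : Fin n,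
      rho o (p.1 s) = rho o (C₀ s) ∧ pairS o (p.1 s) = pairS o (C₀ s) := by
    intro p hp
    have hpS : p.1 ∈ S := hp.1.1
    have hpU : p ∈ U := hp.2
    have hclose : ∀ s i, |p.1 s i o - C₀ s i o| < gp o (C₀ s) / 4 := by
      intro s i
      exact lt_of_lt_of_le (hpU s i) (hεle s)
    have hkey := fun s => key hk o (C₀ s) (p.1 s) (hclose s)
    have hle : ∀ s, cpr o (C₀ s) ≤ cpr o (p.1 s) := fun s => (hkey s).1
    have hsums : ∑ s, cpr o (C₀ s) = ∑ s, cpr o (p.1 s) := by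
      have h1 : ∑ s, cpr o (C₀ s) = ℓ := hC₀S
      have h2 : ∑ s, cpr o (p.1 s) = ℓ := hpS
      rw [h1, h2]
    have hceq : ∀ s : Fin n, cpr o (p.1 s) = cpr o (C₀ s) := by
      intro s
      exact ((Finset.sum_eq_sum_iff_of_le (fun i _ => hle i)).1 hsums s (Finset.mem_univ s)).symm
    intro s
    have hrel := (hkey s).2 (hceq s)
    exact ⟨rel_rho o (C₀ s) (p.1 s) hrel, rel_pairS o (C₀ s) (p.1 s) hrel⟩
  -- conclude by congruence with the globally continuous `posP`
  have hcont : ContinuousWithinAt (fun p : (Fin n → Fin k → E d) × ℝ =>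
      posP o u hn (fun s => rho o (C₀ s)) (fun s => pairS o (C₀ s)) p.1 p.2)
      ((S ×ˢ (Set.univ : Set ℝ)) ∩ U) p₀ :=
    (cont_posP o u hn _ _).continuousAt.continuousWithinAt
  have heq : ∀ p ∈ (S ×ˢ (Set.univ : Set ℝ)) ∩ U,
      pos o u hn p.1 p.2 =
      posP o u hn (fun s => rho o (C₀ s)) (fun s => pairS o (C₀ s)) p.1 p.2 := by
    intro p hp
    exact (posP_congr o u hn p.1 (fun s => ((hdata p hp s).1).symm)
      (fun s => ((hdata p hp s).2).symm) p.2).symm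
  exact (continuousWithinAt_inter (hUopen.mem_nhds hp₀U)).1
    (hcont.congr heq (heq p₀ ⟨hp₀, hp₀U⟩))

end Stmt10Aux

namespace Stmt10Aux

open Finset Function

variable {d k : ℕ}

lemma cp_eq_cpr (hd : 0 < d) (x : Fin k → E d) : cp x = cpr ⟨0, hd⟩ x := by
  set o : Fin d := ⟨0, hd⟩ with ho
  set φ : ℝ → E d := fun r => (WithLp.equiv 2 (Fin d → ℝ)).symm
    fun j => if (j : ℕ) = 0 then r else 0 with hφ
  have hφx : ∀ v : E d, projL v = φ (v o) := by
    intro v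
    unfold projL
    rw [hφ]
    congr 1
    funext j
    by_cases hj : (j : ℕ) = 0
    · rw [if_pos hj, if_pos hj]
      have : j = o := Fin.ext hj
      rw [this]
    · rw [if_neg hj, if_neg hj]
  have hφinj : Function.Injective φ := by
    intro a b h
    have ha : φ a o = a := by
      rw [hφ]
      simp [ho]
    have hb : φ b o = b := by
      rw [hφ]
      simp [ho]
    rw [← ha, ← hb, h]
  have h1 : (Set.range fun i => projL (x i)) = φ '' (Set.range fun i => x i o) := by
    rw [← Set.range_comp]
    have hfun : (fun i : Fin k => projL (x i)) = (φ ∘ fun i => x i o) := by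
      funext i
      exact hφx (x i)
    rw [hfun]
  have h2 : (Set.range fun i => x i o) = ↑(Finset.image (fun i => x i o) Finset.univ) := by
    rw [Finset.coe_image, Finset.coe_univ, Set.image_univ]
  unfold cp cpr
  rw [h1, Set.ncard_image_of_injective _ hφinj, h2, Set.ncard_coe_finset]

lemma cpr_pos (hk : 0 < k) (o : Fin d) (x : Fin k → E d) : 1 ≤ cpr o x := by
  haveI : Nonempty (Fin k) := Fin.pos_iff_nonempty.1 hk
  unfold cpr
  rw [Nat.one_le_iff_ne_zero, ← Nat.pos_iff_ne_zero, Finset.card_pos]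
  exact (Finset.univ_nonempty).image _

lemma cpr_le (o : Fin d) (x : Fin k → E d) : cpr o x ≤ k := by
  unfold cpr
  calc (Finset.image (fun i => x i o) Finset.univ).card ≤ Finset.univ.card :=
        Finset.card_image_le
    _ = k := by rw [Finset.card_univ, Fintype.card_fin]

end Stmt10Aux

open Stmt10Aux

/-- For d, k, n ≥ 2, the n(k-1)+1 sets W_ℓ = ⋃_{j_1+⋯+j_n=ℓ} A_{j_1} × ⋯ × A_{j_n},
ℓ = n,…,nk, are pairwise disjoint, cover F(ℝ^d,k)^n, and each admits a
continuous section of e_n : P(F(ℝ^d,k)) → F(ℝ^d,k)^n. -/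
theorem stmt10 (d k n : ℕ) (hd : 2 ≤ d) (hk : 2 ≤ k) (hn : 2 ≤ n) :
    (∀ ℓ ∈ Set.Icc n (n * k), ∀ ℓ' ∈ Set.Icc n (n * k), ℓ ≠ ℓ' →
      Disjoint (Wset d k n ℓ) (Wset d k n ℓ')) ∧
    (⋃ ℓ ∈ Set.Icc n (n * k), Wset d k n ℓ) = Set.univ ∧
    (∀ ℓ ∈ Set.Icc n (n * k), HasSec n (Wset d k n ℓ)) := by
  have hd0 : 0 < d := by omega
  have hd1 : 1 < d := by omega
  have hk0 : 0 < k := by omega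
  have hn0 : 0 < n := by omega
  set o : Fin d := ⟨0, hd0⟩ with ho
  set u : Fin d := ⟨1, hd1⟩ with hu
  have hou : o ≠ u := by
    intro h
    have := congrArg Fin.val h
    simp [ho, hu] at this
  have hcp : ∀ x : Fin k → E d, cp x = cpr o x := fun x => cp_eq_cpr hd0 x
  refine ⟨?_, ?_, ?_⟩
  · -- disjointness
    intro ℓ _ ℓ' _ hne
    rw [Set.disjoint_left]
    intro C hC hC'
    simp only [Wset, Set.mem_iUnion] at hC hC'
    obtain ⟨jv, ⟨hjv, hsum⟩, hA⟩ := hC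
    obtain ⟨jv', ⟨hjv', hsum'⟩, hA'⟩ := hC'
    apply hne
    rw [← hsum, ← hsum']
    apply Finset.sum_congr rfl
    intro s _
    rw [← hA s, ← hA' s]
  · -- covering
    rw [Set.eq_univ_iff_forall]
    intro C
    have hbound : ∀ s, 1 ≤ cp ((C s : Fin k → E d)) ∧ cp ((C s : Fin k → E d)) ≤ k := by
      intro s
      rw [hcp]
      exact ⟨cpr_pos hk0 o _, cpr_le o _⟩
    set ℓ := ∑ s, cp ((C s : Fin k → E d)) with hℓ
    have hmm : ℓ ∈ Set.Icc n (n * k) := by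
      constructor
      · calc n = ∑ _s : Fin n, 1 := by simp
          _ ≤ ℓ := Finset.sum_le_sum fun s _ => (hbound s).1
      · calc ℓ ≤ ∑ _s : Fin n, k := Finset.sum_le_sum fun s _ => (hbound s).2
          _ = n * k := by simp [Finset.sum_const, Finset.card_univ, smul_eq_mul]
    rw [Set.mem_iUnion]
    refine ⟨ℓ, Set.mem_iUnion.2 ⟨hmm, ?_⟩⟩
    rw [Wset, Set.mem_iUnion]
    exact ⟨fun s => cp ((C s : Fin k → E d)),
      Set.mem_iUnion.2 ⟨⟨hbound, rfl⟩, fun s => rfl⟩⟩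
  · -- sections
    intro ℓ hℓ
    set W := Wset d k n ℓ with hW
    have hWsum : ∀ a : ↥W, ∑ s, cpr o (((a : Fin n → ↥(Conf d k)) s : Fin k → E d)) = ℓ := by
      intro a
      have ha := a.2
      simp only [hW, Wset, Set.mem_iUnion] at ha
      obtain ⟨jv, ⟨hjv, hsum⟩, hA⟩ := ha
      rw [← hsum]
      apply Finset.sum_congr rfl
      intro s _
      rw [← hcp]
      exact hA s
    set ι : ↥W → (Fin n → Fin k → E d) :=
      fun a s => ((a : Fin n → ↥(Conf d k)) s : Fin k → E d) with hι
    have hιcont : Continuous ι := by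
      apply continuous_pi
      intro s
      exact continuous_subtype_val.comp ((continuous_apply s).comp continuous_subtype_val)
    have hjoint : Continuous fun p : ↥W × unitInterval =>
        pos o u hn0 (ι p.1) (p.2 : ℝ) := by
      have := (pos_contOn hk0 o u hn0 ℓ).comp_continuous
        (f := fun p : ↥W × unitInterval => (ι p.1, (p.2 : ℝ)))
        ((hιcont.comp continuous_fst).prodMk (continuous_subtype_val.comp continuous_snd))
        (fun p => ⟨hWsum p.1, Set.mem_univ _⟩)
      exact this
    have hinj : ∀ (a : ↥W) (t : unitInterval),
        Function.Injective (pos o u hn0 (ι a) (t : ℝ)) := by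
      intro a t
      exact pos_inj o u hn0 hk0 hou hn (ι a)
        (fun s => ((a : Fin n → ↥(Conf d k)) s).2) t.2.1 t.2.2
    set H : C(↥W × unitInterval, ↥(Conf d k)) :=
      ⟨fun p => ⟨pos o u hn0 (ι p.1) (p.2 : ℝ), hinj p.1 p.2⟩,
        hjoint.subtype_mk _⟩ with hH
    refine ⟨fun a => (ContinuousMap.curry H) a, (ContinuousMap.curry H).continuous, ?_⟩
    intro a
    funext i
    show (ContinuousMap.curry H a) (eTime n i) = _
    have hn1 : (0:ℝ) < (n:ℝ) - 1 := by
      have : (2:ℝ) ≤ (n:ℝ) := by exact_mod_cast hn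
      linarith
    have hcoe : ((eTime n i : unitInterval) : ℝ) = (i : ℝ) / ((n : ℝ) - 1) := by
      unfold eTime
      have h0 : 0 ≤ (i : ℝ) / ((n : ℝ) - 1) := by positivity
      have h1' : (i : ℝ) / ((n : ℝ) - 1) ≤ 1 := by
        rw [div_le_one hn1]
        have hι2 : (i : ℕ) ≤ n - 1 := by omega
        calc (i : ℝ) ≤ ((n - 1 : ℕ) : ℝ) := by exact_mod_cast hι2
          _ = (n : ℝ) - 1 := by push_cast [Nat.cast_sub (by omega : 1 ≤ n)]; ring
      rw [Set.coe_projIcc, min_eq_right h1', max_eq_right h0]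
    apply Subtype.ext
    show pos o u hn0 (ι a) ((eTime n i : unitInterval) : ℝ) = _
    rw [hcoe]
    exact pos_eval o u hn0 hn (ι a) i
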